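/- Let σ be a type of states, Λ a type of labels, step : Λ → σ → σ → Prop a labeled transition relation, and P : Λ → σ → σ → Prop an access control policy on steps. Let r_src and r_sink be labels and w a list of labels with r_src ∉ w and r_sink ∉ w, such that r_src is sequentially independent from every label occurring in w. Suppose there is an atomic indirect violation: states a, b, c, d with step r_src a b, a run from b to c over w, step r_sink c d, and ¬ P r_sink c d. Then there is a direct violation with the same endpoints and the same violating step: there exists a state b' with a run from a to b' over w, step r_src b' c, step r_sink c d, and ¬ P r_sink c d. In particular, under these sequential-independence conditions, every atomic indirect broken-access-control vulnerability reduces to a direct one in which the source step is immediately followed by the violating sink step. -/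

import Mathlib

/-- A run from `a` to `b` over a list of labels. -/
inductive Run {σ Λ : Type*} (step : Λ → σ → σ → Prop) : σ → List Λ → σ → Prop
  | nil (a : σ) : Run step a [] a
  | cons {a c b : σ} {r : Λ} {l : List Λ} :
      step r a c → Run step c l b → Run step a (r :: l) b

/-- Labels `r` and `r'` are sequentially independent if two consecutive steps
`r` then `r'` can be reversed, preserving endpoints. -/
def SeqIndep {σ Λ : Type*} (step : Λ → σ → σ → Prop) (r r' : Λ) : Prop :=
  ∀ a b c : σ, step r a b → step r' b c → ∃ d : σ, step r' a d ∧ step r d c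

/-- Soundness for vulnerabilities (condition (1)): every atomic indirect
broken-access-control violation reduces to a direct one in which the source
step is immediately followed by the same violating sink step. -/
lemma push_src {σ Λ : Type*} (step : Λ → σ → σ → Prop) (r_src : Λ) :
    ∀ (w : List Λ) (a b c : σ), (∀ r ∈ w, SeqIndep step r_src r) →
      step r_src a b → Run step b w c →
      ∃ b' : σ, Run step a w b' ∧ step r_src b' c := by
  intro w
  induction w with
  | nil =>
    intro a b c _ h hr
    cases hr
    exact ⟨a, Run.nil a, h⟩
  | cons r l ih =>
    intro a b c hind h hr
    cases hr with
    | cons h1 h2 =>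
      obtain ⟨e, he1, he2⟩ := hind r List.mem_cons_self a b _ h h1
      obtain ⟨b', hb1, hb2⟩ := ih e _ c (fun r hr => hind r (List.mem_cons_of_mem _ hr)) he2 h2
      exact ⟨b', Run.cons he1 hb1, hb2⟩

theorem indirect_to_direct_violation_src {σ Λ : Type*}
    (step : Λ → σ → σ → Prop) (P : Λ → σ → σ → Prop)
    (r_src r_sink : Λ) (w : List Λ)
    (hsrc_notin : r_src ∉ w) (hsink_notin : r_sink ∉ w)
    (hindep : ∀ r ∈ w, SeqIndep step r_src r)
    (a b c d : σ)
    (hstep_src : step r_src a b) (hrun : Run step b w c)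
    (hstep_sink : step r_sink c d) (hviol : ¬ P r_sink c d) :
    ∃ b' : σ, Run step a w b' ∧ step r_src b' c ∧
      step r_sink c d ∧ ¬ P r_sink c d := by
  obtain ⟨b', h1, h2⟩ := push_src step r_src w a b c hindep hstep_src hrun
  exact ⟨b', h1, h2, hstep_sink, hviol⟩
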